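/- The one-step rewrite relation → of the system BC is confluent: for all terms t, u, v (of the same sort), if t →* u and t →* v then there exists a term w with u →* w and v →* w. (Together with termination, this establishes that BC is a convergent rewrite system.) -/

import Mathlib

/-- Two-sorted ground element-terms: atoms and `h`. -/
inductive ETerm (A : Type*) : Type _
  | atom : A → ETerm A
  | h : ETerm A → ETerm A → ETerm A

/-- Two-sorted ground list-terms: `nil`, `cons` and `bc`. -/
inductive LTerm (A : Type*) : Type _
  | nil : LTerm A
  | cons : ETerm A → LTerm A → LTerm A
  | bc : LTerm A → ETerm A → LTerm A

/-- One-step rewriting of the system BC on element-terms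
(closure of the rules under the constructor `h`). -/
inductive EStep {A : Type*} : ETerm A → ETerm A → Prop
  | hLeft {x x' y : ETerm A} : EStep x x' → EStep (ETerm.h x y) (ETerm.h x' y)
  | hRight {x y y' : ETerm A} : EStep y y' → EStep (ETerm.h x y) (ETerm.h x y')

/-- One-step rewriting of the system BC on list-terms: the rules
`bc nil z → nil` and `bc (cons x Y) z → cons (h x z) (bc Y (h x z))`,
closed under all constructor contexts. -/
inductive LStep {A : Type*} : LTerm A → LTerm A → Prop
  | bcNil (z : ETerm A) : LStep (LTerm.bc LTerm.nil z) LTerm.nil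
  | bcCons (x z : ETerm A) (Y : LTerm A) :
      LStep (LTerm.bc (LTerm.cons x Y) z)
            (LTerm.cons (ETerm.h x z) (LTerm.bc Y (ETerm.h x z)))
  | consHead {x x' : ETerm A} {Y : LTerm A} :
      EStep x x' → LStep (LTerm.cons x Y) (LTerm.cons x' Y)
  | consTail {x : ETerm A} {Y Y' : LTerm A} :
      LStep Y Y' → LStep (LTerm.cons x Y) (LTerm.cons x Y')
  | bcLeft {X X' : LTerm A} {z : ETerm A} :
      LStep X X' → LStep (LTerm.bc X z) (LTerm.bc X' z)
  | bcRight {X : LTerm A} {z z' : ETerm A} :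
      EStep z z' → LStep (LTerm.bc X z) (LTerm.bc X z')

/-- `EStep` has no base case, hence is the empty relation. -/
lemma estep_empty {A : Type*} {t u : ETerm A} (h : EStep t u) : False := by
  induction h <;> assumption

lemma lstep_nil {A : Type*} {u : LTerm A} (h : LStep LTerm.nil u) : False := by
  cases h

/-- Strong local confluence of `LStep`. -/
lemma lstep_strong {A : Type*} :
    ∀ {a b c : LTerm A}, LStep a b → LStep a c →
      ∃ d, Relation.ReflGen LStep b d ∧ Relation.ReflTransGen LStep c d := by
  intro a b c h1
  induction h1 generalizing c with
  | bcNil z =>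
    intro h2
    cases h2 with
    | bcNil => exact ⟨LTerm.nil, .refl, .refl⟩
    | bcLeft h => exact absurd h lstep_nil
    | bcRight h => exact absurd h estep_empty
  | bcCons x z Y =>
    intro h2
    cases h2 with
    | bcCons => exact ⟨_, .refl, .refl⟩
    | bcLeft h =>
      cases h with
      | consHead h => exact absurd h estep_empty
      | consTail h =>
        exact ⟨_, .single (.consTail (.bcLeft h)),
          .single (.bcCons x z _)⟩
    | bcRight h => exact absurd h estep_empty
  | consHead h => exact absurd h estep_empty
  | consTail h ih =>
    intro h2
    cases h2 with
    | consHead h' => exact absurd h' estep_empty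
    | consTail h' =>
      obtain ⟨d, hd1, hd2⟩ := ih h'
      cases hd1 with
      | refl =>
        exact ⟨_, .refl, Relation.ReflTransGen.lift _ (fun _ _ h'' => LStep.consTail h'') _ _ hd2⟩
      | single h'' =>
        exact ⟨_, .single (.consTail h''),
          Relation.ReflTransGen.lift _ (fun _ _ h'' => LStep.consTail h'') _ _ hd2⟩
  | bcLeft h ih =>
    intro h2
    cases h2 with
    | bcNil => exact absurd h lstep_nil
    | bcCons =>
      cases h with
      | consHead h' => exact absurd h' estep_empty
      | consTail h' =>
        exact ⟨_, .single (.bcCons _ _ _),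
          .single (.consTail (.bcLeft h'))⟩
    | bcLeft h' =>
      obtain ⟨d, hd1, hd2⟩ := ih h'
      cases hd1 with
      | refl =>
        exact ⟨_, .refl, Relation.ReflTransGen.lift _ (fun _ _ h'' => LStep.bcLeft h'') _ _ hd2⟩
      | single h'' =>
        exact ⟨_, .single (.bcLeft h''),
          Relation.ReflTransGen.lift _ (fun _ _ h'' => LStep.bcLeft h'') _ _ hd2⟩
    | bcRight h' => exact absurd h' estep_empty
  | bcRight h => exact absurd h estep_empty

/-- The one-step rewrite relation of BC is confluent (on both sorts). -/
theorem bc_rewrite_confluent {A : Type*} :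
    (∀ t u v : ETerm A, Relation.ReflTransGen EStep t u →
        Relation.ReflTransGen EStep t v →
        ∃ w, Relation.ReflTransGen EStep u w ∧ Relation.ReflTransGen EStep v w) ∧
    (∀ t u v : LTerm A, Relation.ReflTransGen LStep t u →
        Relation.ReflTransGen LStep t v →
        ∃ w, Relation.ReflTransGen LStep u w ∧ Relation.ReflTransGen LStep v w) := by
  constructor
  · intro t u v htu htv
    exact ⟨t, by
      cases (Relation.reflTransGen_iff_eq (fun _ h => estep_empty h)).mp htu; exact .refl,
      by cases (Relation.reflTransGen_iff_eq (fun _ h => estep_empty h)).mp htv; exact .refl⟩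
  · intro t u v htu htv
    exact Relation.church_rosser (fun a b c h1 h2 => lstep_strong h1 h2) htu htv
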